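/- Let A be an n×n real matrix and suppose the map Ĉ(X) = X + (AX)^{*3} from ℝⁿ to ℝⁿ is not proper. Then there exists W ∈ Im(Aᵀ) such that A((AW)^{*3}) = 0 but AW ≠ 0. -/

import Mathlib

/-- If the cubic-linear map `Ĉ(X) = X + (AX)^{*3}` on `ℝⁿ` is not proper, then there exists
`W ∈ Im(Aᵀ)` such that `A((AW)^{*3}) = 0` but `AW ≠ 0`. -/
theorem not_proper_gives_nontrivial_kernel_point (n : ℕ) (A : Matrix (Fin n) (Fin n) ℝ)
    (hnp : ¬ ∀ C : Set (Fin n → ℝ), IsCompact C →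
      IsCompact ((fun X : Fin n → ℝ => fun i => X i + (A.mulVec X i) ^ 3) ⁻¹' C)) :
    ∃ W ∈ Set.range A.transpose.mulVec,
      A.mulVec (fun k => (A.mulVec W k) ^ 3) = 0 ∧ A.mulVec W ≠ 0 := by
  by_contra hcon
  push_neg at hcon
  apply hnp
  intro C hC
  -- continuity of the map
  have hmc : Continuous fun X : Fin n → ℝ => A.mulVec X := by
    have := A.mulVecLin.toContinuousLinearMap.continuous
    exact this
  have hFc : Continuous fun X : Fin n → ℝ => fun i => X i + (A.mulVec X i) ^ 3 := by
    apply continuous_pi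
    intro i
    exact (continuous_apply i).add (((continuous_apply i).comp hmc).pow 3)
  -- range(A Aᵀ) = range A
  have hrange : LinearMap.range (A * A.transpose).mulVecLin = LinearMap.range A.mulVecLin := by
    apply Submodule.eq_of_le_of_finrank_eq
    · rw [Matrix.mulVecLin_mul]
      exact LinearMap.range_comp_le_range _ _
    · exact Matrix.rank_self_mul_transpose A
  -- key: on range of A, the cubic map vanishes only at 0
  have key : ∀ U ∈ LinearMap.range A.mulVecLin,
      A.mulVec (fun k => U k ^ 3) = 0 → U = 0 := by
    intro U hU h0
    rw [← hrange] at hU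
    obtain ⟨Z, hZ⟩ := hU
    have hZ' : A.mulVec (A.transpose.mulVec Z) = U := by
      rw [Matrix.mulVec_mulVec, ← Matrix.mulVecLin_apply, hZ]
    have := hcon (A.transpose.mulVec Z) ⟨Z, rfl⟩
    rw [hZ'] at this
    exact this h0
  by_cases hA : ∀ X : Fin n → ℝ, A.mulVec X = 0
  · -- A = 0 : map is the identity
    have : (fun X : Fin n → ℝ => fun i => X i + (A.mulVec X i) ^ 3) ⁻¹' C = C := by
      ext X
      simp [hA X, Set.mem_preimage]
    rw [this]; exact hC
  push_neg at hA
  obtain ⟨X₀, hX₀⟩ := hA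
  -- the compact set K
  set S : Set (Fin n → ℝ) := ↑(LinearMap.range A.mulVecLin) with hS
  set K : Set (Fin n → ℝ) := Metric.sphere 0 1 ∩ S with hK
  have hKc : IsCompact K := (isCompact_sphere 0 1).inter_right
    (Submodule.closed_of_finiteDimensional _)
  have hKne : K.Nonempty := by
    refine ⟨‖A.mulVec X₀‖⁻¹ • A.mulVec X₀, ?_, ?_⟩
    · rw [mem_sphere_zero_iff_norm, norm_smul]
      simp [norm_ne_zero_iff.mpr hX₀, inv_mul_cancel₀ (norm_ne_zero_iff.mpr hX₀)]
    · exact Submodule.smul_mem _ _ ⟨X₀, by simp⟩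
  -- minimum of g on K
  have hgc : Continuous fun U : Fin n → ℝ => ‖A.mulVec fun k => U k ^ 3‖ := by
    apply continuous_norm.comp
    exact hmc.comp (continuous_pi fun k => (continuous_apply k).pow 3)
  obtain ⟨U₀, hU₀K, hU₀min⟩ := hKc.exists_isMinOn hKne hgc.continuousOn
  have hεpos : 0 < ‖A.mulVec fun k => U₀ k ^ 3‖ := by
    rcases (norm_nonneg (A.mulVec fun k => U₀ k ^ 3)).lt_or_eq with h | h
    · exact h
    · exfalso
      have h0 : A.mulVec (fun k => U₀ k ^ 3) = 0 := norm_eq_zero.mp h.symm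
      have hU0 : U₀ = 0 := key U₀ hU₀K.2 h0
      have h1 : ‖U₀‖ = 1 := by
        have := hU₀K.1
        rwa [mem_sphere_zero_iff_norm] at this
      rw [hU0] at h1; simp at h1
  set ε : ℝ := ‖A.mulVec fun k => U₀ k ^ 3‖ with hε
  -- scaling inequality
  have hscale : ∀ X : Fin n → ℝ,
      ε * ‖A.mulVec X‖ ^ 3 ≤ ‖A.mulVec fun k => (A.mulVec X k) ^ 3‖ := by
    intro X
    by_cases h0 : A.mulVec X = 0
    · rw [h0]
      have : (fun k => (0 : Fin n → ℝ) k ^ 3) = (0 : Fin n → ℝ) := by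
        funext k; simp
      rw [this]
      simp
    · set t : ℝ := ‖A.mulVec X‖ with ht
      have htpos : 0 < t := norm_pos_iff.mpr h0
      have hU : (t⁻¹ • A.mulVec X) ∈ K := by
        constructor
        · rw [mem_sphere_zero_iff_norm, norm_smul]
          simp [ht, abs_of_pos (inv_pos.mpr htpos), inv_mul_cancel₀ htpos.ne',
            inv_mul_cancel₀ (norm_ne_zero_iff.mpr h0)]
        · exact Submodule.smul_mem _ _ ⟨X, by simp⟩
      have hcube : (fun k => (t⁻¹ • A.mulVec X) k ^ 3)
          = (t⁻¹) ^ 3 • fun k => (A.mulVec X k) ^ 3 := by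
        funext k; simp [mul_pow]
      have hmin : ‖A.mulVec fun k => U₀ k ^ 3‖
          ≤ ‖A.mulVec fun k => (t⁻¹ • A.mulVec X) k ^ 3‖ := hU₀min hU
      rw [hcube, Matrix.mulVec_smul, norm_smul] at hmin
      have h2 : ε ≤ (t⁻¹) ^ 3 * ‖A.mulVec fun k => (A.mulVec X k) ^ 3‖ := by
        have habs : ‖(t⁻¹ : ℝ) ^ 3‖ = (t⁻¹) ^ 3 := by
          rw [Real.norm_eq_abs, abs_of_pos (pow_pos (inv_pos.mpr htpos) 3)]
        rwa [habs] at hmin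
      calc ε * t ^ 3 ≤ ((t⁻¹) ^ 3 * ‖A.mulVec fun k => (A.mulVec X k) ^ 3‖) * t ^ 3 :=
            mul_le_mul_of_nonneg_right h2 (by positivity)
        _ = ‖A.mulVec fun k => (A.mulVec X k) ^ 3‖ := by
            field_simp
  -- operator bound
  obtain ⟨c, hc0, hc⟩ : ∃ c : ℝ, 0 ≤ c ∧ ∀ v, ‖A.mulVec v‖ ≤ c * ‖v‖ := by
    refine ⟨‖A.mulVecLin.toContinuousLinearMap‖, norm_nonneg _, fun v => ?_⟩
    simpa using A.mulVecLin.toContinuousLinearMap.le_opNorm v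
  -- bound on C
  obtain ⟨B, hB⟩ := isBounded_iff_forall_norm_le.mp hC.isBounded
  rcases C.eq_empty_or_nonempty with hCe | ⟨y₀, hy₀⟩
  · simp [hCe]
  have hB0 : 0 ≤ B := (norm_nonneg y₀).trans (hB y₀ hy₀)
  -- preimage is closed and bounded
  apply Metric.isCompact_of_isClosed_isBounded (hC.isClosed.preimage hFc)
  rw [isBounded_iff_forall_norm_le]
  set M : ℝ := 1 + (c * B + c * B + 1) / ε with hM
  have hM1 : (1 : ℝ) ≤ M := by
    have : 0 ≤ (c * B + c * B + 1) / ε := div_nonneg (by positivity) hεpos.le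
    rw [hM]; linarith
  refine ⟨B + M ^ 3, ?_⟩
  intro X hX
  have hYC : (fun i => X i + (A.mulVec X i) ^ 3) ∈ C := hX
  set Y : Fin n → ℝ := fun i => X i + (A.mulVec X i) ^ 3 with hY
  have hYB : ‖Y‖ ≤ B := hB Y hYC
  set t : ℝ := ‖A.mulVec X‖ with ht
  have ht0 : 0 ≤ t := norm_nonneg _
  have hAY : A.mulVec Y = A.mulVec X + A.mulVec (fun k => (A.mulVec X k) ^ 3) := by
    rw [show Y = X + (fun k => (A.mulVec X k) ^ 3) from rfl, Matrix.mulVec_add]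
  have hkey : ε * t ^ 3 ≤ c * B + t := by
    have heq : A.mulVec (fun k => (A.mulVec X k) ^ 3) = A.mulVec Y - A.mulVec X := by
      rw [hAY, add_sub_cancel_left]
    have h1 : ‖A.mulVec fun k => (A.mulVec X k) ^ 3‖ ≤ c * B + t :=
      calc ‖A.mulVec fun k => (A.mulVec X k) ^ 3‖ = ‖A.mulVec Y - A.mulVec X‖ := by rw [heq]
        _ ≤ ‖A.mulVec Y‖ + ‖A.mulVec X‖ := norm_sub_le _ _
        _ ≤ c * B + t := by
            refine add_le_add ?_ le_rfl
            exact (hc Y).trans (mul_le_mul_of_nonneg_left hYB hc0)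
    exact (hscale X).trans h1
  -- solve the cubic inequality : t ≤ M
  have htM : t ≤ M := by
    by_contra hgt
    push_neg at hgt
    have h1 : (1 : ℝ) ≤ t := hM1.trans hgt.le
    have hεM : ε * M = ε + (c * B + c * B + 1) := by
      rw [hM]; field_simp
    have h3 : c * B + c * B + 1 < ε * t := by
      have := mul_lt_mul_of_pos_left hgt hεpos
      rw [hεM] at this
      linarith
    have ht1 : (0:ℝ) < t := lt_of_lt_of_le zero_lt_one h1
    have h4 : (c * B + c * B + 1) * t ^ 2 < ε * t * t ^ 2 :=
      mul_lt_mul_of_pos_right h3 (by positivity)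
    have h5 : t ≤ t ^ 2 := by nlinarith
    nlinarith [hkey, h1, hc0, hB0, mul_nonneg hc0 hB0,
      mul_le_mul_of_nonneg_left h5 (by positivity : (0:ℝ) ≤ c * B + c * B + 1)]
  -- bound ‖X‖
  have hXb : ‖X‖ ≤ B + t ^ 3 := by
    apply (pi_norm_le_iff_of_nonneg (by positivity)).mpr
    intro i
    have hXi : X i = Y i - (A.mulVec X i) ^ 3 := by simp [hY]
    rw [hXi]
    calc ‖Y i - (A.mulVec X i) ^ 3‖ ≤ ‖Y i‖ + ‖(A.mulVec X i) ^ 3‖ := norm_sub_le _ _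
      _ ≤ B + t ^ 3 := by
          refine add_le_add ((norm_le_pi_norm Y i).trans hYB) ?_
          rw [norm_pow]
          exact pow_le_pow_left₀ (norm_nonneg _) (norm_le_pi_norm _ i) 3
  have ht3 : t ^ 3 ≤ M ^ 3 := pow_le_pow_left₀ ht0 htM 3
  linarith
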